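/- Let P be a poset. Then P is an algebraic poset if and only if the complete lattice Γ(P) of Scott closed subsets of P (ordered by inclusion) is an algebraic lattice. -/

import Mathlib

open Topology TopologicalSpace Set

/-- `x` is way-below `y`: for every directed set `d` having a least upper bound `a`,
if `y ≤ a` then some element of `d` dominates `x`. -/
def WayBelow {α : Type*} [Preorder α] (x y : α) : Prop :=
  ∀ d : Set α, d.Nonempty → DirectedOn (· ≤ ·) d → ∀ a : α, IsLUB d a → y ≤ a → ∃ z ∈ d, x ≤ z

/-- A poset is algebraic if for every `x` the set `↓x ∩ K(α)` of compact elements below `x`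
is directed (in particular nonempty) with least upper bound `x`, where
`K(α) = {k | k ≪ k}`. -/
def AlgebraicPoset (α : Type*) [Preorder α] : Prop :=
  ∀ x : α, (Set.Iic x ∩ {k : α | WayBelow k k}).Nonempty ∧
    DirectedOn (· ≤ ·) (Set.Iic x ∩ {k : α | WayBelow k k}) ∧
    IsLUB (Set.Iic x ∩ {k : α | WayBelow k k}) x

section Aux

/-- The bottom element is way below everything. -/
lemma wayBelow_bot' {α : Type*} [Preorder α] [OrderBot α] (x : α) : WayBelow (⊥ : α) x :=
  fun _ hd _ _ _ _ => ⟨hd.choose, hd.choose_spec, bot_le⟩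

/-- The join of two compact elements is compact. -/
lemma WayBelow.sup' {α : Type*} [SemilatticeSup α] {x y : α} (hx : WayBelow x x)
    (hy : WayBelow y y) : WayBelow (x ⊔ y) (x ⊔ y) := by
  intro d hd hdir a ha hle
  obtain ⟨z1, hz1, hxz1⟩ := hx d hd hdir a ha (le_sup_left.trans hle)
  obtain ⟨z2, hz2, hyz2⟩ := hy d hd hdir a ha (le_sup_right.trans hle)
  obtain ⟨z, hz, h1, h2⟩ := hdir z1 hz1 z2 hz2
  exact ⟨z, hz, sup_le (hxz1.trans h1) (hyz2.trans h2)⟩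

variable {P : Type*} [PartialOrder P] [TopologicalSpace P] [Topology.IsScott P Set.univ]

/-- If `k` is compact in `P` then `↓k` is compact in `Γ(P)`. -/
lemma wayBelow_Iic_closeds {k : P} (hk : WayBelow k k) :
    WayBelow (⟨Iic k, isClosed_Iic⟩ : Closeds P)
      ⟨Iic k, isClosed_Iic⟩ := by
  intro d hd hdir a ha hle
  have hsup : sSup d = a := ha.sSup_eq
  set A : Set P := ⋃₀ ((fun C : Closeds P => (C : Set P)) '' d) with hA
  have hAlower : IsLowerSet A := by
    intro u v huv hu
    obtain ⟨s, ⟨C, hC, rfl⟩, hus⟩ := hu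
    exact ⟨C, ⟨C, hC, rfl⟩, Topology.IsScott.isLowerSet_of_isClosed C.isClosed huv hus⟩
  set B : Set P := {y : P | ∀ c : P, WayBelow c c → c ≤ y → c ∈ A} with hB
  have hBclosed : IsClosed B := by
    rw [Topology.IsScott.isClosed_iff_isLowerSet_and_dirSupClosed]
    constructor
    · intro u v huv hu c hc hcv
      exact hu c hc (hcv.trans huv)
    · intro D hDB hDne hDdir s hs c hc hcs
      obtain ⟨z, hz, hcz⟩ := hc D hDne hDdir s hs hcs
      exact hDB hz c hc hcz
  have hABclosure : closure A ⊆ B := by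
    apply closure_minimal _ hBclosed
    intro y hy c _ hcy
    exact hAlower hcy hy
  have hkA : k ∈ A := by
    have hk' : k ∈ closure A := by
      have := hle (mem_Iic.2 (le_refl k))
      rwa [← hsup] at this
    exact hABclosure hk' k hk le_rfl
  obtain ⟨s, ⟨C, hC, rfl⟩, hks⟩ := hkA
  refine ⟨C, hC, ?_⟩
  intro y hy
  exact Topology.IsScott.isLowerSet_of_isClosed C.isClosed (mem_Iic.1 hy) hks

lemma isClosed_downF (F : Finset P) : IsClosed (⋃ f ∈ F, Iic f) :=
  F.finite_toSet.isClosed_biUnion (fun _ _ => isClosed_Iic)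

/-- A compact Scott-closed set is generated by a finite set. -/
lemma exists_finset_gen (Q : Closeds P) (hQ : WayBelow Q Q) :
    ∃ F : Finset P, ↑F ⊆ (Q : Set P) ∧ (Q : Set P) ⊆ ⋃ f ∈ F, Iic f := by
  classical
  set d : Set (Closeds P) :=
    {D : Closeds P | ∃ F : Finset P, ↑F ⊆ (Q : Set P) ∧ (D : Set P) = ⋃ f ∈ F, Iic f} with hd
  have hne : d.Nonempty := ⟨⊥, ∅, by simp, by simp [Closeds.coe_bot]⟩
  have hdir : DirectedOn (· ≤ ·) d := by
    rintro D1 ⟨F1, hF1, hD1⟩ D2 ⟨F2, hF2, hD2⟩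
    refine ⟨⟨(⋃ f ∈ (F1 ∪ F2 : Finset P), Iic f), isClosed_downF _⟩,
      ⟨F1 ∪ F2, by rw [Finset.coe_union]; exact union_subset hF1 hF2, rfl⟩, ?_, ?_⟩
    · intro y hy
      rw [← SetLike.mem_coe, hD1] at hy
      show y ∈ ⋃ f ∈ (F1 ∪ F2 : Finset P), Iic f
      simp only [mem_iUnion] at hy ⊢
      obtain ⟨f, hf, hyf⟩ := hy
      exact ⟨f, Finset.mem_union_left _ hf, hyf⟩
    · intro y hy
      rw [← SetLike.mem_coe, hD2] at hy
      show y ∈ ⋃ f ∈ (F1 ∪ F2 : Finset P), Iic f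
      simp only [mem_iUnion] at hy ⊢
      obtain ⟨f, hf, hyf⟩ := hy
      exact ⟨f, Finset.mem_union_right _ hf, hyf⟩
  have hle : Q ≤ sSup d := by
    intro y hy
    have : y ∈ ⋃₀ ((fun C : Closeds P => (C : Set P)) '' d) := by
      refine ⟨Iic y, ⟨⟨Iic y, isClosed_Iic⟩,
        ⟨{y}, by simpa using hy, by simp⟩, rfl⟩, mem_Iic.2 le_rfl⟩
    exact subset_closure this
  obtain ⟨D, hD, hQD⟩ := hQ d hne hdir (sSup d) (isLUB_sSup d) hle
  obtain ⟨F, hF, hDF⟩ := hD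
  exact ⟨F, hF, by rw [← hDF]; exact hQD⟩

/-- Every element of a compact Scott-closed set is below a compact element of the set. -/
lemma exists_compact_above (Q : Closeds P) (hQ : WayBelow Q Q) {y : P} (hy : y ∈ (Q : Set P)) :
    ∃ k ∈ (Q : Set P), WayBelow k k ∧ y ≤ k := by
  classical
  set Gen : Set ℕ := {n | ∃ F : Finset P, F.card = n ∧ ↑F ⊆ (Q : Set P) ∧
    (Q : Set P) ⊆ ⋃ f ∈ F, Iic f} with hGen
  have hGne : Gen.Nonempty := by
    obtain ⟨F, h1, h2⟩ := exists_finset_gen Q hQ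
    exact ⟨F.card, F, rfl, h1, h2⟩
  obtain ⟨F, hcard, hFQ, hQF⟩ := Nat.sInf_mem hGne
  have hmax : ∀ f ∈ F, ∀ q ∈ (Q : Set P), f ≤ q → q = f := by
    intro f hf q hq hfq
    obtain ⟨g, hg, hqg⟩ := by simpa only [mem_iUnion, mem_Iic] using hQF hq
    by_cases hgf : g = f
    · exact le_antisymm (hgf ▸ hqg) hfq
    · exfalso
      have hmem : (F.erase f).card ∈ Gen := by
        refine ⟨F.erase f, rfl, (Finset.coe_subset.2 (F.erase_subset f)).trans hFQ, ?_⟩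
        intro z hz
        obtain ⟨h, hh, hzh⟩ := by simpa only [mem_iUnion, mem_Iic] using hQF hz
        simp only [mem_iUnion, mem_Iic]
        by_cases hhf : h = f
        · exact ⟨g, Finset.mem_erase.2 ⟨hgf, hg⟩, ((hzh.trans (hhf ▸ hfq : h ≤ q)).trans hqg)⟩
        · exact ⟨h, Finset.mem_erase.2 ⟨hhf, hh⟩, hzh⟩
      have h1 := Nat.sInf_le hmem
      rw [← hcard] at h1
      have hlt : (F.erase f).card < F.card := Finset.card_erase_lt_of_mem hf
      omega
  have hcompact : ∀ f ∈ F, WayBelow f f := by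
    intro f hf d hd hdir a ha hle2
    set e : Set (Closeds P) := {D : Closeds P | ∃ z ∈ d,
      (D : Set P) = Iic z ∪ ⋃ g ∈ F.erase f, Iic g} with he
    have hce : ∀ z : P, IsClosed (Iic z ∪ ⋃ g ∈ F.erase f, Iic g) :=
      fun z => isClosed_Iic.union (isClosed_downF _)
    have hene : e.Nonempty := by
      obtain ⟨z, hz⟩ := hd
      exact ⟨⟨_, hce z⟩, z, hz, rfl⟩
    have hedir : DirectedOn (· ≤ ·) e := by
      rintro D1 ⟨z1, hz1, hD1⟩ D2 ⟨z2, hz2, hD2⟩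
      obtain ⟨z, hz, h1, h2⟩ := hdir z1 hz1 z2 hz2
      refine ⟨⟨_, hce z⟩, ⟨z, hz, rfl⟩, ?_, ?_⟩
      · intro w hw
        rw [← SetLike.mem_coe, hD1] at hw
        exact union_subset_union_left _ (Iic_subset_Iic.2 h1) hw
      · intro w hw
        rw [← SetLike.mem_coe, hD2] at hw
        exact union_subset_union_left _ (Iic_subset_Iic.2 h2) hw
    have hQe : Q ≤ sSup e := by
      have hclosedSup : IsClosed (closure (⋃₀ ((fun C : Closeds P => (C : Set P)) '' e))) :=
        isClosed_closure
      have hael : a ∈ closure (⋃₀ ((fun C : Closeds P => (C : Set P)) '' e)) := by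
        refine Topology.IsScott.dirSupClosed_of_isClosed hclosedSup ?_ hd hdir ha
        intro z hz
        apply subset_closure
        exact ⟨Iic z ∪ ⋃ g ∈ F.erase f, Iic g, ⟨⟨_, hce z⟩, ⟨z, hz, rfl⟩, rfl⟩,
          Or.inl (mem_Iic.2 le_rfl)⟩
      intro y2 hy2
      obtain ⟨g, hg, hyg⟩ := by simpa only [mem_iUnion, mem_Iic] using hQF hy2
      show y2 ∈ closure (⋃₀ ((fun C : Closeds P => (C : Set P)) '' e))
      by_cases hgf : g = f
      · exact Topology.IsScott.isLowerSet_of_isClosed hclosedSup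
          ((hyg.trans (hgf ▸ le_rfl : g ≤ f)).trans hle2) hael
      · obtain ⟨z0, hz0⟩ := hd
        apply subset_closure
        refine ⟨Iic z0 ∪ ⋃ g ∈ F.erase f, Iic g, ⟨⟨_, hce z0⟩, ⟨z0, hz0, rfl⟩, rfl⟩, Or.inr ?_⟩
        simp only [mem_iUnion, mem_Iic]
        exact ⟨g, Finset.mem_erase.2 ⟨hgf, hg⟩, hyg⟩
    obtain ⟨D, ⟨z, hz, hDz⟩, hQD⟩ := hQ e hene hedir (sSup e) (isLUB_sSup e) hQe
    have hfD : f ∈ (D : Set P) := hQD (hFQ hf)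
    rw [hDz] at hfD
    rcases hfD with hfz | hferase
    · exact ⟨z, hz, hfz⟩
    · exfalso
      obtain ⟨g, hg, hfg⟩ := by simpa only [mem_iUnion, mem_Iic] using hferase
      have hgQ := hmax f hf g (hFQ (F.erase_subset f hg)) hfg
      exact (Finset.mem_erase.1 hg).1 hgQ
  obtain ⟨g, hg, hyg⟩ := by simpa only [mem_iUnion, mem_Iic] using hQF hy
  exact ⟨g, hFQ hg, hcompact g hg, hyg⟩

end Aux

/-- A poset `P` is algebraic iff the complete lattice `Γ(P)` of Scott closed subsets of `P`
is an algebraic lattice. -/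
theorem algebraicPoset_iff_algebraic_closeds
    {P : Type*} [PartialOrder P] [TopologicalSpace P] [Topology.IsScott P Set.univ] :
    AlgebraicPoset P ↔ AlgebraicPoset (TopologicalSpace.Closeds P) := by
  constructor
  · -- forward
    intro halg C
    refine ⟨⟨⊥, mem_Iic.2 bot_le, wayBelow_bot' ⊥⟩, ?_, ?_, ?_⟩
    · rintro D1 ⟨h1, hc1⟩ D2 ⟨h2, hc2⟩
      exact ⟨D1 ⊔ D2, ⟨mem_Iic.2 (sup_le (mem_Iic.1 h1) (mem_Iic.1 h2)), hc1.sup' hc2⟩,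
        le_sup_left, le_sup_right⟩
    · exact fun D hD => hD.1
    · intro U hU
      intro x hx
      obtain ⟨hne, hdir, hlub⟩ := halg x
      have hTU : Iic x ∩ {k : P | WayBelow k k} ⊆ (U : Set P) := by
        rintro c ⟨hcx, hc⟩
        have hIc : (⟨Iic c, isClosed_Iic⟩ : Closeds P) ∈
            Set.Iic C ∩ {k : Closeds P | WayBelow k k} := by
          refine ⟨mem_Iic.2 ?_, wayBelow_Iic_closeds hc⟩
          intro z hz
          exact Topology.IsScott.isLowerSet_of_isClosed C.isClosed
            ((mem_Iic.1 hz).trans (mem_Iic.1 hcx)) hx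
        exact hU hIc (mem_Iic.2 le_rfl)
      exact Topology.IsScott.dirSupClosed_of_isClosed U.isClosed hTU hne hdir hlub
  · -- backward
    intro halg x
    set Ix : Closeds P := ⟨Iic x, isClosed_Iic⟩ with hIx
    obtain ⟨hne, hdir, hlub⟩ := halg Ix
    set S : Set (Closeds P) := Set.Iic Ix ∩ {k : Closeds P | WayBelow k k} with hS
    refine ⟨?_, ?_, ?_, ?_⟩
    · -- nonempty
      have hsup : sSup S = Ix := hlub.sSup_eq
      have hx : x ∈ closure (⋃₀ ((fun C : Closeds P => (C : Set P)) '' S)) := by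
        have : x ∈ (sSup S : Closeds P) := by rw [hsup]; exact mem_Iic.2 le_rfl
        exact this
      have hU : (⋃₀ ((fun C : Closeds P => (C : Set P)) '' S)).Nonempty := by
        by_contra hcon
        rw [not_nonempty_iff_eq_empty] at hcon
        rw [hcon, closure_empty] at hx
        exact hx
      obtain ⟨y, s, ⟨Q, hQS, rfl⟩, hys⟩ := hU
      obtain ⟨k, hkQ, hk, _⟩ := exists_compact_above Q hQS.2 hys
      exact ⟨k, mem_Iic.2 (mem_Iic.1 (hQS.1 hkQ)), hk⟩
    · -- directed
      rintro k1 ⟨hk1x, hk1⟩ k2 ⟨hk2x, hk2⟩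
      set Cs : Set P := {y : P | y ≤ x ∧ ¬(k1 ≤ y ∧ k2 ≤ y)} with hCs
      have hCclosed : IsClosed Cs := by
        rw [Topology.IsScott.isClosed_iff_isLowerSet_and_dirSupClosed]
        constructor
        · rintro u v hvu ⟨hux, hnu⟩
          exact ⟨hvu.trans hux, fun ⟨h1, h2⟩ => hnu ⟨h1.trans hvu, h2.trans hvu⟩⟩
        · intro D hDC hDne hDdir s hs
          refine ⟨?_, ?_⟩
          · exact (isLUB_le_iff hs).2 (fun z hz => (hDC hz).1)
          · rintro ⟨h1, h2⟩
            obtain ⟨d1, hd1, hkd1⟩ := hk1 D hDne hDdir s hs h1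
            obtain ⟨d2, hd2, hkd2⟩ := hk2 D hDne hDdir s hs h2
            obtain ⟨dd, hdd, hh1, hh2⟩ := hDdir d1 hd1 d2 hd2
            exact (hDC hdd).2 ⟨hkd1.trans hh1, hkd2.trans hh2⟩
      have hnotall : ¬ ∀ Q ∈ S, Q ≤ (⟨Cs, hCclosed⟩ : Closeds P) := by
        intro hall
        have hub : (⟨Cs, hCclosed⟩ : Closeds P) ∈ upperBounds S := fun Q hQ => hall Q hQ
        have := hlub.2 hub (mem_Iic.2 le_rfl : x ∈ (Ix : Set P))
        exact this.2 ⟨mem_Iic.1 hk1x, mem_Iic.1 hk2x⟩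
      push_neg at hnotall
      obtain ⟨Q, hQS, hQC⟩ := hnotall
      have hEy : ∃ y ∈ (Q : Set P), y ∉ Cs := by
        by_contra hcon
        push_neg at hcon
        exact hQC hcon
      obtain ⟨y, hyQ, hyC⟩ := hEy
      have hyx : y ≤ x := mem_Iic.1 (hQS.1 hyQ)
      have hky : k1 ≤ y ∧ k2 ≤ y := by
        by_contra hcon
        exact hyC ⟨hyx, hcon⟩
      obtain ⟨k, hkQ, hk, hyk⟩ := exists_compact_above Q hQS.2 hyQ
      exact ⟨k, ⟨mem_Iic.2 (mem_Iic.1 (hQS.1 hkQ)), hk⟩, hky.1.trans hyk, hky.2.trans hyk⟩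
    · -- upper bound
      exact fun k hk => mem_Iic.1 hk.1
    · -- least upper bound
      intro u hu
      have hub : (⟨Iic u, isClosed_Iic⟩ : Closeds P) ∈ upperBounds S := by
        rintro Q ⟨hQx, hQc⟩
        intro y hy
        obtain ⟨k, hkQ, hk, hyk⟩ := exists_compact_above Q hQc hy
        have hkx : k ≤ x := mem_Iic.1 (hQx hkQ)
        have hku : k ≤ u := hu ⟨mem_Iic.2 hkx, hk⟩
        exact mem_Iic.2 (hyk.trans hku)
      have := hlub.2 hub (mem_Iic.2 le_rfl : x ∈ (Ix : Set P))
      exact mem_Iic.1 this
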